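/- Minkowski sum ellipsoidal bound: for positive semidefinite matrices Q₁, Q₂ ∈ 𝕊₊^n, centers q₁, q₂ ∈ ℝⁿ, and any γ ∈ (0,1), the Minkowski sum E(q₁,Q₁) ⊕ E(q₂,Q₂) is contained in the ellipsoid E(q₁+q₂, (1/γ)Q₁ + (1/(1−γ))Q₂). -/

import Mathlib

open Matrix MeasureTheory

open scoped ComplexOrder in
/-- The square root of a positive semidefinite matrix, as defined in the older Mathlib
(`Matrix.PosSemidef.sqrt`, since removed). -/
noncomputable def Matrix.PosSemidef.sqrt {n 𝕜 : Type*} [Fintype n] [DecidableEq n] [RCLike 𝕜]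
    {A : Matrix n n 𝕜} (hA : A.PosSemidef) : Matrix n n 𝕜 :=
  (hA.1.eigenvectorUnitary : Matrix n n 𝕜) * diagonal ((↑) ∘ (√·) ∘ hA.1.eigenvalues) *
  (star hA.1.eigenvectorUnitary : Matrix n n 𝕜)


lemma Matrix.PosSemidef.sqrt_isHermitian {n : Type*} [Fintype n] [DecidableEq n]
    {A : Matrix n n ℝ} (hA : A.PosSemidef) : hA.sqrt.IsHermitian := by
  simp [Matrix.IsHermitian, Matrix.PosSemidef.sqrt, Matrix.conjTranspose_mul, Matrix.mul_assoc,
    Matrix.star_eq_conjTranspose]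

lemma Matrix.PosSemidef.sqrt_mul_self {n : Type*} [Fintype n] [DecidableEq n]
    {A : Matrix n n ℝ} (hA : A.PosSemidef) : hA.sqrt * hA.sqrt = A := by
  have hU : (star hA.1.eigenvectorUnitary : Matrix n n ℝ) * (hA.1.eigenvectorUnitary : Matrix n n ℝ) = 1 :=
    Unitary.coe_star_mul_self _
  conv_rhs => rw [hA.1.spectral_theorem, Unitary.conjStarAlgAut_apply]
  simp only [Matrix.PosSemidef.sqrt, Matrix.mul_assoc]
  rw [← Matrix.mul_assoc (star _) _ (diagonal _ * _), hU, Matrix.one_mul,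
    ← Matrix.mul_assoc (diagonal _) (diagonal _), diagonal_mul_diagonal]
  congr 3
  funext i
  simp [Real.mul_self_sqrt (hA.eigenvalues_nonneg i)]

noncomputable def ellipsoid {m : ℕ} {Q : Matrix (Fin m) (Fin m) ℝ}
    (q : Fin m → ℝ) (hQ : Q.PosSemidef) : Set (Fin m → ℝ) :=
  {x | ∃ v : Fin m → ℝ, v ⬝ᵥ v ≤ 1 ∧ x = q + hQ.sqrt.mulVec v}

noncomputable def frob {p q : ℕ} (M : Matrix (Fin p) (Fin q) ℝ) : ℝ :=
  Real.sqrt (Matrix.trace (Mᵀ * M))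

section Aux

open LinearMap Submodule RealInnerProductSpace

variable {E : Type*} [NormedAddCommGroup E] [InnerProductSpace ℝ E] [FiniteDimensional ℝ E]

lemma symm_range_eq (P : E →ₗ[ℝ] E) (hP : P.IsSymmetric) :
    LinearMap.range P = (LinearMap.ker P)ᗮ := by
  have hle : LinearMap.range P ≤ (LinearMap.ker P)ᗮ := by
    rintro _ ⟨y, rfl⟩
    intro z hz
    rw [LinearMap.mem_ker] at hz
    rw [← hP z y, hz, inner_zero_left]
  apply Submodule.eq_of_le_of_finrank_eq hle
  have h1 := LinearMap.finrank_range_add_finrank_ker P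
  have h2 := Submodule.finrank_add_finrank_orthogonal (LinearMap.ker P)
  omega

lemma aux (P A B : E →ₗ[ℝ] E) (hP : P.IsSymmetric) (hA : A.IsSymmetric) (hB : B.IsSymmetric)
    (h : ∀ y, ⟪P y, P y⟫ = ⟪A y, A y⟫ + ⟪B y, B y⟫) (a b : E) :
    ∃ u, ⟪u, u⟫ ≤ ⟪a, a⟫ + ⟪b, b⟫ ∧ P u = A a + B b := by
  -- kernel facts
  have hker : ∀ y, P y = 0 → A y = 0 ∧ B y = 0 := by
    intro y hy
    have h0 := h y
    rw [hy, inner_zero_left] at h0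
    have hA0 : (0:ℝ) ≤ ⟪A y, A y⟫ := real_inner_self_nonneg
    have hB0 : (0:ℝ) ≤ ⟪B y, B y⟫ := real_inner_self_nonneg
    constructor
    · rw [← inner_self_eq_zero (𝕜 := ℝ)]; linarith
    · rw [← inner_self_eq_zero (𝕜 := ℝ)]; linarith
  -- range A ≤ range P
  have hrange : ∀ (C : E →ₗ[ℝ] E), C.IsSymmetric → (∀ y, P y = 0 → C y = 0) →
      LinearMap.range C ≤ LinearMap.range P := by
    intro C hC hkerC
    rw [symm_range_eq P hP]
    rintro _ ⟨y, rfl⟩ z hz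
    rw [LinearMap.mem_ker] at hz
    rw [← hC z y, hkerC z hz, inner_zero_left]
  have hw : A a + B b ∈ LinearMap.range P := by
    exact add_mem (hrange A hA (fun y hy => (hker y hy).1) ⟨a, rfl⟩)
      (hrange B hB (fun y hy => (hker y hy).2) ⟨b, rfl⟩)
  -- range P² = range P
  have hker2 : LinearMap.ker (P ∘ₗ P) = LinearMap.ker P := by
    apply le_antisymm
    · intro y hy
      rw [LinearMap.mem_ker] at hy ⊢
      have : ⟪P (P y), y⟫ = 0 := by rw [show P (P y) = 0 from hy, inner_zero_left]
      rw [hP (P y) y] at this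
      rwa [inner_self_eq_zero (𝕜 := ℝ)] at this
    · intro y hy
      rw [LinearMap.mem_ker] at hy ⊢
      simp [LinearMap.comp_apply, hy]
  have hrange2 : LinearMap.range (P ∘ₗ P) = LinearMap.range P := by
    apply Submodule.eq_of_le_of_finrank_eq (LinearMap.range_comp_le_range P P)
    have h1 := LinearMap.finrank_range_add_finrank_ker (P ∘ₗ P)
    have h2 := LinearMap.finrank_range_add_finrank_ker P
    rw [hker2] at h1
    omega
  rw [← hrange2] at hw
  obtain ⟨y, hy⟩ := hw
  rw [LinearMap.comp_apply] at hy
  refine ⟨P y, ?_, hy⟩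
  -- norm estimate
  have key : ⟪P y, P y⟫ = ⟪A y, a⟫ + ⟪B y, b⟫ := by
    rw [hP y (P y), hy, inner_add_right, ← hA y a, ← hB y b]
  have hnorm : ⟪P y, P y⟫ = ‖A y‖ ^ 2 + ‖B y‖ ^ 2 := by
    rw [h y, real_inner_self_eq_norm_sq, real_inner_self_eq_norm_sq]
  have hcs1 : ⟪A y, a⟫ ≤ ‖A y‖ * ‖a‖ := real_inner_le_norm _ _
  have hcs2 : ⟪B y, b⟫ ≤ ‖B y‖ * ‖b‖ := real_inner_le_norm _ _
  rw [real_inner_self_eq_norm_sq, real_inner_self_eq_norm_sq a,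
    real_inner_self_eq_norm_sq b]
  have hp : ‖P y‖ ^ 2 ≤ ‖A y‖ * ‖a‖ + ‖B y‖ * ‖b‖ := by
    rw [← real_inner_self_eq_norm_sq]; linarith [key]
  have hp2 : ‖P y‖ ^ 2 = ‖A y‖ ^ 2 + ‖B y‖ ^ 2 := by
    rw [← real_inner_self_eq_norm_sq]; exact hnorm
  nlinarith [sq_nonneg (‖A y‖ * ‖b‖ - ‖B y‖ * ‖a‖), norm_nonneg (P y), norm_nonneg (A y),
    norm_nonneg (B y), norm_nonneg a, norm_nonneg b, sq_nonneg (‖P y‖),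
    mul_nonneg (norm_nonneg (A y)) (norm_nonneg a), mul_nonneg (norm_nonneg (B y)) (norm_nonneg b)]

open Matrix in
lemma matrix_key {n : ℕ} (P A B : Matrix (Fin n) (Fin n) ℝ)
    (hP : P.IsHermitian) (hA : A.IsHermitian) (hB : B.IsHermitian)
    (h : ∀ y : Fin n → ℝ, (P *ᵥ y) ⬝ᵥ (P *ᵥ y) = (A *ᵥ y) ⬝ᵥ (A *ᵥ y) + (B *ᵥ y) ⬝ᵥ (B *ᵥ y))
    (a b : Fin n → ℝ) :
    ∃ u, u ⬝ᵥ u ≤ a ⬝ᵥ a + b ⬝ᵥ b ∧ P *ᵥ u = A *ᵥ a + B *ᵥ b := by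
  have hdot : ∀ x y : EuclideanSpace ℝ (Fin n),
      ⟪x, y⟫ = (WithLp.equiv 2 (Fin n → ℝ) x) ⬝ᵥ (WithLp.equiv 2 (Fin n → ℝ) y) := by
    intro x y
    simp [PiLp.inner_apply, dotProduct, mul_comm]
  have happ : ∀ (M : Matrix (Fin n) (Fin n) ℝ) (v : EuclideanSpace ℝ (Fin n)),
      WithLp.equiv 2 (Fin n → ℝ) (Matrix.toEuclideanLin M v)
        = M *ᵥ (WithLp.equiv 2 (Fin n → ℝ) v) := fun M v => rfl
  obtain ⟨u, hu1, hu2⟩ := aux (Matrix.toEuclideanLin P) (Matrix.toEuclideanLin A)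
    (Matrix.toEuclideanLin B) (Matrix.isHermitian_iff_isSymmetric.mp hP)
    (Matrix.isHermitian_iff_isSymmetric.mp hA) (Matrix.isHermitian_iff_isSymmetric.mp hB)
    (by intro y; simp only [hdot, happ]; exact h _)
    ((WithLp.equiv 2 (Fin n → ℝ)).symm a) ((WithLp.equiv 2 (Fin n → ℝ)).symm b)
  refine ⟨WithLp.equiv 2 (Fin n → ℝ) u, ?_, ?_⟩
  · simpa only [hdot, Equiv.apply_symm_apply] using hu1
  · have := congrArg (WithLp.equiv 2 (Fin n → ℝ)) hu2
    simpa only [happ, Equiv.apply_symm_apply, show ∀ x y : EuclideanSpace ℝ (Fin n), WithLp.equiv 2 (Fin n → ℝ) (x + y) = WithLp.equiv 2 (Fin n → ℝ) x + WithLp.equiv 2 (Fin n → ℝ) y from fun _ _ => rfl] using this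

open Matrix in
lemma hsq {n : ℕ} (M : Matrix (Fin n) (Fin n) ℝ) (hM : Mᵀ = M) (y : Fin n → ℝ) :
    (M *ᵥ y) ⬝ᵥ (M *ᵥ y) = y ⬝ᵥ ((M * M) *ᵥ y) := by
  rw [← Matrix.mulVec_mulVec, Matrix.dotProduct_mulVec y, ← Matrix.mulVec_transpose, hM]

open Matrix in
lemma herm_of_transpose {n : ℕ} {M : Matrix (Fin n) (Fin n) ℝ} (hM : Mᵀ = M) :
    M.IsHermitian := by
  rw [Matrix.IsHermitian, Matrix.conjTranspose_eq_transpose_of_trivial, hM]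

end Aux

theorem stmt4 {n : ℕ} (q₁ q₂ : Fin n → ℝ) {Q₁ Q₂ : Matrix (Fin n) (Fin n) ℝ}
    (hQ₁ : Q₁.PosSemidef) (hQ₂ : Q₂.PosSemidef) (γ : ℝ) (hγ0 : 0 < γ) (hγ1 : γ < 1)
    (hS : ((1 / γ) • Q₁ + (1 / (1 - γ)) • Q₂).PosSemidef) :
    {x | ∃ a ∈ ellipsoid q₁ hQ₁, ∃ b ∈ ellipsoid q₂ hQ₂, x = a + b}
      ⊆ ellipsoid (q₁ + q₂) hS := by
  intro x hx
  simp only [Set.mem_setOf_eq, ellipsoid] at hx ⊢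
  obtain ⟨a, ⟨v₁, hv₁, rfl⟩, b, ⟨v₂, hv₂, rfl⟩, rfl⟩ := hx
  have hγ2 : 0 < 1 - γ := by linarith
  set A := hQ₁.sqrt with hAdef
  set B := hQ₂.sqrt with hBdef
  set P := hS.sqrt with hPdef
  have htr : ∀ {M : Matrix (Fin n) (Fin n) ℝ}, M.IsHermitian → Mᵀ = M := by
    intro M hM
    rw [← Matrix.conjTranspose_eq_transpose_of_trivial, hM]
  have hAt : Aᵀ = A := htr hQ₁.sqrt_isHermitian
  have hBt : Bᵀ = B := htr hQ₂.sqrt_isHermitian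
  have hPt : Pᵀ = P := htr hS.sqrt_isHermitian
  set A' := Real.sqrt (1/γ) • A with hA'def
  set B' := Real.sqrt (1/(1-γ)) • B with hB'def
  have hA't : A'ᵀ = A' := by rw [hA'def, Matrix.transpose_smul, hAt]
  have hB't : B'ᵀ = B' := by rw [hB'def, Matrix.transpose_smul, hBt]
  have hA'sq : A' * A' = (1/γ) • Q₁ := by
    rw [hA'def, Matrix.smul_mul, Matrix.mul_smul, smul_smul,
      Real.mul_self_sqrt (by positivity), hQ₁.sqrt_mul_self]
  have hB'sq : B' * B' = (1/(1-γ)) • Q₂ := by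
    rw [hB'def, Matrix.smul_mul, Matrix.mul_smul, smul_smul,
      Real.mul_self_sqrt (by positivity), hQ₂.sqrt_mul_self]
  have hPsq : P * P = (1/γ) • Q₁ + (1/(1-γ)) • Q₂ := hS.sqrt_mul_self
  have hmain : ∀ y, (P *ᵥ y) ⬝ᵥ (P *ᵥ y)
      = (A' *ᵥ y) ⬝ᵥ (A' *ᵥ y) + (B' *ᵥ y) ⬝ᵥ (B' *ᵥ y) := by
    intro y
    rw [hsq P hPt, hsq A' hA't, hsq B' hB't, hPsq, hA'sq, hB'sq, Matrix.add_mulVec,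
      dotProduct_add]
  obtain ⟨u, hu1, hu2⟩ := matrix_key P A' B' (herm_of_transpose hPt) (herm_of_transpose hA't)
    (herm_of_transpose hB't) hmain (Real.sqrt γ • v₁) (Real.sqrt (1-γ) • v₂)
  have h1 : (Real.sqrt γ • v₁) ⬝ᵥ (Real.sqrt γ • v₁) = γ * (v₁ ⬝ᵥ v₁) := by
    rw [smul_dotProduct, dotProduct_smul, smul_eq_mul, smul_eq_mul,
      ← mul_assoc, Real.mul_self_sqrt hγ0.le]
  have h2 : (Real.sqrt (1-γ) • v₂) ⬝ᵥ (Real.sqrt (1-γ) • v₂) = (1-γ) * (v₂ ⬝ᵥ v₂) := by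
    rw [smul_dotProduct, dotProduct_smul, smul_eq_mul, smul_eq_mul,
      ← mul_assoc, Real.mul_self_sqrt hγ2.le]
  have hA'a : A' *ᵥ (Real.sqrt γ • v₁) = A *ᵥ v₁ := by
    rw [hA'def, Matrix.smul_mulVec, Matrix.mulVec_smul, smul_smul,
      ← Real.sqrt_mul (by positivity), one_div, inv_mul_cancel₀ (ne_of_gt hγ0),
      Real.sqrt_one, one_smul]
  have hB'b : B' *ᵥ (Real.sqrt (1-γ) • v₂) = B *ᵥ v₂ := by
    rw [hB'def, Matrix.smul_mulVec, Matrix.mulVec_smul, smul_smul,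
      ← Real.sqrt_mul (by positivity), one_div, inv_mul_cancel₀ (ne_of_gt hγ2),
      Real.sqrt_one, one_smul]
  rw [hA'a, hB'b] at hu2
  refine ⟨u, ?_, ?_⟩
  · rw [h1, h2] at hu1
    nlinarith [hu1, hv₁, hv₂]
  · show q₁ + A *ᵥ v₁ + (q₂ + B *ᵥ v₂) = q₁ + q₂ + P *ᵥ u
    rw [hu2]
    abel
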